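/- Let t1, t2 be CLL process terms. (1) If t1 ⇒ε_F| t1' and t2 ⇒ε_F| t2', then t1⊙t2 ⇒ε_F| t1'⊙t2' for ⊙ ∈ {□, ∥_A}; moreover t1∧t2 ⇒ε_F| t1'∧t2' provided t1'∧t2' ∉ F_CLL. (2) For each ⊙ ∈ {□, ∥_A, ∧}: if t1⊙t2 ⇒ε_F| t3 then there exist t1', t2' with t1 ⇒ε_F| t1', t2 ⇒ε_F| t2' and t3 ≡ t1'⊙t2'. -/

import Mathlib

namespace CLL

attribute [local instance] Classical.propDecidable

/-- CLL process terms over a set `Act` of visible actions.  The action `τ` is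
represented by `none : Option Act`, a visible action `a` by `some a`. -/
inductive Tm (Act : Type) : Type where
  | nil  : Tm Act                            -- 0
  | bot  : Tm Act                            -- ⊥
  | pre  : Option Act → Tm Act → Tm Act      -- α.t
  | ec   : Tm Act → Tm Act → Tm Act          -- t □ t
  | conj : Tm Act → Tm Act → Tm Act          -- t ∧ t
  | disj : Tm Act → Tm Act → Tm Act          -- t ∨ t
  | par  : Set Act → Tm Act → Tm Act → Tm Act -- t ∥_A t

/-- A transition model: a set of transitions `t →α t'`, of instances `t F` of the
inconsistency predicate, and of instances `t F̄_α` of the auxiliary predicates. -/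
structure Model (Act : Type) where
  Tr   : Tm Act → Option Act → Tm Act → Prop
  F    : Tm Act → Prop
  Fbar : Tm Act → Option Act → Prop

variable {Act : Type}

/-- The least transition relation of the positive TSS `Strip(P_CLL, M)`:
ground instances of transition rules of `P_CLL` whose negative premises
(checked against `M`) hold, with those negative premises removed. -/
inductive STr (M : Model Act) : Tm Act → Option Act → Tm Act → Prop where
  | pre (α : Option Act) (t : Tm Act) : STr M (Tm.pre α t) α t
  | ecL {t1 t2 y1 : Tm Act} {a : Act} :
      STr M t1 (some a) y1 → (∀ y, ¬ M.Tr t2 none y) →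
      STr M (Tm.ec t1 t2) (some a) y1
  | ecR {t1 t2 y2 : Tm Act} {a : Act} :
      (∀ y, ¬ M.Tr t1 none y) → STr M t2 (some a) y2 →
      STr M (Tm.ec t1 t2) (some a) y2
  | ecTauL {t1 t2 y1 : Tm Act} :
      STr M t1 none y1 → STr M (Tm.ec t1 t2) none (Tm.ec y1 t2)
  | ecTauR {t1 t2 y2 : Tm Act} :
      STr M t2 none y2 → STr M (Tm.ec t1 t2) none (Tm.ec t1 y2)
  | conjAct {t1 t2 y1 y2 : Tm Act} {a : Act} :
      STr M t1 (some a) y1 → STr M t2 (some a) y2 →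
      STr M (Tm.conj t1 t2) (some a) (Tm.conj y1 y2)
  | conjTauL {t1 t2 y1 : Tm Act} :
      STr M t1 none y1 → STr M (Tm.conj t1 t2) none (Tm.conj y1 t2)
  | conjTauR {t1 t2 y2 : Tm Act} :
      STr M t2 none y2 → STr M (Tm.conj t1 t2) none (Tm.conj t1 y2)
  | disjL (t1 t2 : Tm Act) : STr M (Tm.disj t1 t2) none t1
  | disjR (t1 t2 : Tm Act) : STr M (Tm.disj t1 t2) none t2
  | parTauL {A : Set Act} {t1 t2 y1 : Tm Act} :
      STr M t1 none y1 → STr M (Tm.par A t1 t2) none (Tm.par A y1 t2)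
  | parTauR {A : Set Act} {t1 t2 y2 : Tm Act} :
      STr M t2 none y2 → STr M (Tm.par A t1 t2) none (Tm.par A t1 y2)
  | parL {A : Set Act} {t1 t2 y1 : Tm Act} {a : Act} :
      STr M t1 (some a) y1 → (∀ y, ¬ M.Tr t2 none y) → a ∉ A →
      STr M (Tm.par A t1 t2) (some a) (Tm.par A y1 t2)
  | parR {A : Set Act} {t1 t2 y2 : Tm Act} {a : Act} :
      (∀ y, ¬ M.Tr t1 none y) → STr M t2 (some a) y2 → a ∉ A →
      STr M (Tm.par A t1 t2) (some a) (Tm.par A t1 y2)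
  | parSync {A : Set Act} {t1 t2 y1 y2 : Tm Act} {a : Act} :
      STr M t1 (some a) y1 → STr M t2 (some a) y2 → a ∈ A →
      STr M (Tm.par A t1 t2) (some a) (Tm.par A y1 y2)

/-- Least model of the `F̄_α` rules of `Strip(P_CLL, M)`. -/
inductive SFbar (M : Model Act) : Tm Act → Option Act → Prop where
  | intro {t1 t2 y : Tm Act} {α : Option Act} :
      STr M (Tm.conj t1 t2) α y → ¬ M.F y → SFbar M (Tm.conj t1 t2) α

/-- Least model of the `F` rules of `Strip(P_CLL, M)`. -/
inductive SF (M : Model Act) : Tm Act → Prop where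
  | bot : SF M Tm.bot
  | pre {t : Tm Act} (α : Option Act) : SF M t → SF M (Tm.pre α t)
  | disj {t1 t2 : Tm Act} : SF M t1 → SF M t2 → SF M (Tm.disj t1 t2)
  | ecL {t1 t2 : Tm Act} : SF M t1 → SF M (Tm.ec t1 t2)
  | ecR {t1 t2 : Tm Act} : SF M t2 → SF M (Tm.ec t1 t2)
  | conjL {t1 t2 : Tm Act} : SF M t1 → SF M (Tm.conj t1 t2)
  | conjR {t1 t2 : Tm Act} : SF M t2 → SF M (Tm.conj t1 t2)
  | parL {A : Set Act} {t1 t2 : Tm Act} : SF M t1 → SF M (Tm.par A t1 t2)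
  | parR {A : Set Act} {t1 t2 : Tm Act} : SF M t2 → SF M (Tm.par A t1 t2)
  | conjMisL {t1 t2 y1 : Tm Act} {a : Act} :
      STr M t1 (some a) y1 → (∀ y, ¬ M.Tr t2 (some a) y) →
      (∀ y, ¬ M.Tr (Tm.conj t1 t2) none y) → SF M (Tm.conj t1 t2)
  | conjMisR {t1 t2 y2 : Tm Act} {a : Act} :
      (∀ y, ¬ M.Tr t1 (some a) y) → STr M t2 (some a) y2 →
      (∀ y, ¬ M.Tr (Tm.conj t1 t2) none y) → SF M (Tm.conj t1 t2)
  | conjDead {t1 t2 z : Tm Act} {α : Option Act} :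
      STr M (Tm.conj t1 t2) α z → ¬ M.Fbar (Tm.conj t1 t2) α →
      SF M (Tm.conj t1 t2)

/-- `M` is a stable transition model of `P_CLL`:  `M` coincides with the least
model of the positive TSS `Strip(P_CLL, M)`. -/
def IsStable (M : Model Act) : Prop :=
  (∀ t α t', M.Tr t α t' ↔ STr M t α t') ∧
  (∀ t, M.F t ↔ SF M t) ∧
  (∀ t α, M.Fbar t α ↔ SFbar M t α)

/-- `t` is stable: it has no τ-transition. -/
def Stable (M : Model Act) (t : Tm Act) : Prop := ∀ t', ¬ M.Tr t none t'

/-- The ready set `I(t)`. -/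
def Ready (M : Model Act) (t : Tm Act) : Set (Option Act) :=
  {α | ∃ u, M.Tr t α u}

/-- One τ-step between consistent terms: `t →τ_F s`. -/
def TauF (M : Model Act) (t s : Tm Act) : Prop :=
  M.Tr t none s ∧ ¬ M.F t ∧ ¬ M.F s

/-- `t ⇒ε_F s`: a sequence of τ-transitions all whose terms (endpoints included)
are consistent. -/
def EpsF (M : Model Act) (t s : Tm Act) : Prop :=
  ¬ M.F t ∧ Relation.ReflTransGen (TauF M) t s

/-- `t ⇒ε_F| s`:  `t ⇒ε_F s` with `s` stable. -/
def EpsFS (M : Model Act) (t s : Tm Act) : Prop :=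
  EpsF M t s ∧ Stable M s

/-- `t ⇒α_F s`. -/
def WeakF (M : Model Act) (α : Option Act) (t s : Tm Act) : Prop :=
  ∃ r p, EpsF M t r ∧ M.Tr r α p ∧ EpsF M p s

/-- `t ⇒α_F| s`. -/
def WeakFS (M : Model Act) (α : Option Act) (t s : Tm Act) : Prop :=
  WeakF M α t s ∧ Stable M s

/-- `R` is a stable ready simulation relation. -/
def IsRS (M : Model Act) (R : Tm Act → Tm Act → Prop) : Prop :=
  ∀ t s, R t s →
    (Stable M t ∧ Stable M s) ∧
    (¬ M.F t → ¬ M.F s) ∧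
    (∀ (a : Act) t', WeakFS M (some a) t t' →
      ∃ s', WeakFS M (some a) s s' ∧ R t' s') ∧
    (¬ M.F t → Ready M t = Ready M s)

/-- `t ⊏̃_RS s`. -/
def RSs (M : Model Act) (t s : Tm Act) : Prop :=
  ∃ R, IsRS M R ∧ R t s

/-- `t ⊑_RS s`. -/
def RSle (M : Model Act) (t s : Tm Act) : Prop :=
  ∀ t', EpsFS M t t' → ∃ s', EpsFS M s s' ∧ RSs M t' s'

/-- `t =_RS s`. -/
def RSeq (M : Model Act) (t s : Tm Act) : Prop :=
  RSle M t s ∧ RSle M s t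

/-- The binary operators `□`, `∧` and `∥_A`. -/
def IsStaticOp (Act : Type) (op : Tm Act → Tm Act → Tm Act) : Prop :=
  op = Tm.ec ∨ op = Tm.conj ∨ ∃ A : Set Act, op = Tm.par A

/-- General external choice `□_{i<n} t_i` over a finite sequence of terms. -/
def bigEC : List (Tm Act) → Tm Act
  | [] => Tm.nil
  | t :: ts => ts.foldl Tm.ec t

/-- General disjunction `⋁_{i<n} t_i` over a finite (nonempty) sequence. -/
def bigDisj : List (Tm Act) → Tm Act
  | [] => Tm.nil
  | t :: ts => ts.foldl Tm.disj t

/-- `□_{i<n} a_i.t_i` for a sequence of prefixed terms given by pairs. -/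
def ecPre (l : List (Act × Tm Act)) : Tm Act :=
  bigEC (l.map fun p => Tm.pre (some p.1) p.2)

/-- The sequence of all `a_i.(t_i ∧ s_j)` with `a_i = b_j`. -/
noncomputable def matched (l1 l2 : List (Act × Tm Act)) : List (Act × Tm Act) :=
  ((l1.product l2).filter fun q => decide (q.1.1 = q.2.1)).map
    fun q => (q.1.1, Tm.conj q.1.2 q.2.2)

/-- The right-hand side `((□Ω1)□(□Ω2))□(□Ω3)` of the expansion law. -/
noncomputable def expRHS (A : Set Act) (l1 l2 : List (Act × Tm Act)) : Tm Act :=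
  Tm.ec
    (Tm.ec
      (bigEC ((l1.filter fun p => decide (p.1 ∉ A)).map
        fun p => Tm.pre (some p.1) (Tm.par A p.2 (ecPre l2))))
      (bigEC ((l2.filter fun q => decide (q.1 ∉ A)).map
        fun q => Tm.pre (some q.1) (Tm.par A (ecPre l1) q.2))))
    (bigEC (((l1.product l2).filter fun q => decide (q.1.1 = q.2.1 ∧ q.1.1 ∈ A)).map
      fun q => Tm.pre (some q.1.1) (Tm.par A q.1.2 q.2.2)))

/-- Basic process terms: built from `0` by prefixing, `∨`, `□` and `∥_A`. -/
inductive Basic : Tm Act → Prop where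
  | nil : Basic Tm.nil
  | pre (α : Option Act) {t : Tm Act} : Basic t → Basic (Tm.pre α t)
  | disj {t1 t2 : Tm Act} : Basic t1 → Basic t2 → Basic (Tm.disj t1 t2)
  | ec {t1 t2 : Tm Act} : Basic t1 → Basic t2 → Basic (Tm.ec t1 t2)
  | par (A : Set Act) {t1 t2 : Tm Act} :
      Basic t1 → Basic t2 → Basic (Tm.par A t1 t2)

/-- Derivability `⊢ t ≤ s` in the axiomatic system `AX_CLL`. -/
inductive Deriv : Tm Act → Tm Act → Prop where
  -- inference rules
  | refl (t : Tm Act) : Deriv t t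
  | trans {t u s : Tm Act} : Deriv t u → Deriv u s → Deriv t s
  | pre_mono (α : Option Act) {t s : Tm Act} :
      Deriv t s → Deriv (Tm.pre α t) (Tm.pre α s)
  | ec_mono {t1 s1 t2 s2 : Tm Act} :
      Deriv t1 s1 → Deriv t2 s2 → Deriv (Tm.ec t1 t2) (Tm.ec s1 s2)
  | conj_mono {t1 s1 t2 s2 : Tm Act} :
      Deriv t1 s1 → Deriv t2 s2 → Deriv (Tm.conj t1 t2) (Tm.conj s1 s2)
  | disj_mono {t1 s1 t2 s2 : Tm Act} :
      Deriv t1 s1 → Deriv t2 s2 → Deriv (Tm.disj t1 t2) (Tm.disj s1 s2)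
  | par_mono (A : Set Act) {t1 s1 t2 s2 : Tm Act} :
      Deriv t1 s1 → Deriv t2 s2 → Deriv (Tm.par A t1 t2) (Tm.par A s1 s2)
  -- EC1–EC5
  | ec_comm (x y : Tm Act) : Deriv (Tm.ec x y) (Tm.ec y x)
  | ec_assoc1 (x y z : Tm Act) : Deriv (Tm.ec (Tm.ec x y) z) (Tm.ec x (Tm.ec y z))
  | ec_assoc2 (x y z : Tm Act) : Deriv (Tm.ec x (Tm.ec y z)) (Tm.ec (Tm.ec x y) z)
  | ec_idem1 (x : Tm Act) : Deriv (Tm.ec x x) x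
  | ec_idem2 (x : Tm Act) : Deriv x (Tm.ec x x)
  | ec_nil1 (x : Tm Act) : Deriv (Tm.ec x Tm.nil) x
  | ec_nil2 (x : Tm Act) : Deriv x (Tm.ec x Tm.nil)
  | ec_bot1 (x : Tm Act) : Deriv (Tm.ec x Tm.bot) Tm.bot
  | ec_bot2 (x : Tm Act) : Deriv Tm.bot (Tm.ec x Tm.bot)
  -- DI1–DI5
  | di_comm (x y : Tm Act) : Deriv (Tm.disj x y) (Tm.disj y x)
  | di_assoc1 (x y z : Tm Act) :
      Deriv (Tm.disj x (Tm.disj y z)) (Tm.disj (Tm.disj x y) z)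
  | di_assoc2 (x y z : Tm Act) :
      Deriv (Tm.disj (Tm.disj x y) z) (Tm.disj x (Tm.disj y z))
  | di_idem1 (x : Tm Act) : Deriv (Tm.disj x x) x
  | di_idem2 (x : Tm Act) : Deriv x (Tm.disj x x)
  | di_bot1 (x : Tm Act) : Deriv (Tm.disj x Tm.bot) x
  | di_bot2 (x : Tm Act) : Deriv x (Tm.disj x Tm.bot)
  | di_le (x y : Tm Act) : Deriv x (Tm.disj x y)
  -- CO1–CO4
  | co_comm (x y : Tm Act) : Deriv (Tm.conj x y) (Tm.conj y x)
  | co_assoc1 (x y z : Tm Act) :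
      Deriv (Tm.conj (Tm.conj x y) z) (Tm.conj x (Tm.conj y z))
  | co_assoc2 (x y z : Tm Act) :
      Deriv (Tm.conj x (Tm.conj y z)) (Tm.conj (Tm.conj x y) z)
  | co_idem1 (x : Tm Act) : Deriv (Tm.conj x x) x
  | co_idem2 (x : Tm Act) : Deriv x (Tm.conj x x)
  | co_bot1 (x : Tm Act) : Deriv (Tm.conj x Tm.bot) Tm.bot
  | co_bot2 (x : Tm Act) : Deriv Tm.bot (Tm.conj x Tm.bot)
  -- DS1–DS4
  | ds1 (x y z : Tm Act) :
      Deriv (Tm.ec x (Tm.disj y z)) (Tm.disj (Tm.ec x y) (Tm.ec x z))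
  | ds2 (x y z : Tm Act) :
      Deriv (Tm.conj x (Tm.disj y z)) (Tm.disj (Tm.conj x y) (Tm.conj x z))
  | ds3 (A : Set Act) (x y z : Tm Act) :
      Deriv (Tm.par A x (Tm.disj y z)) (Tm.disj (Tm.par A x y) (Tm.par A x z))
  | ds4 (a : Act) {x y : Tm Act} : Basic x → Basic y →
      Deriv (Tm.pre (some a) (Tm.disj x y))
            (Tm.ec (Tm.pre (some a) x) (Tm.pre (some a) y))
  -- PR1, PR2
  | pr1a (a : Act) : Deriv (Tm.pre (some a) Tm.bot) Tm.bot
  | pr1b (a : Act) : Deriv Tm.bot (Tm.pre (some a) Tm.bot)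
  | pr2a (x : Tm Act) : Deriv (Tm.pre none x) x
  | pr2b (x : Tm Act) : Deriv x (Tm.pre none x)
  -- PA1, PA2
  | pa_comm (A : Set Act) (x y : Tm Act) : Deriv (Tm.par A x y) (Tm.par A y x)
  | pa_bot1 (A : Set Act) (x : Tm Act) : Deriv (Tm.par A x Tm.bot) Tm.bot
  | pa_bot2 (A : Set Act) (x : Tm Act) : Deriv Tm.bot (Tm.par A x Tm.bot)
  -- ECC1–ECC3
  | ecc1a (l1 l2 : List (Act × Tm Act)) :
      ({a | a ∈ l1.map Prod.fst} : Set Act) ≠ {a | a ∈ l2.map Prod.fst} →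
      Deriv (Tm.conj (ecPre l1) (ecPre l2)) Tm.bot
  | ecc1b (l1 l2 : List (Act × Tm Act)) :
      ({a | a ∈ l1.map Prod.fst} : Set Act) ≠ {a | a ∈ l2.map Prod.fst} →
      Deriv Tm.bot (Tm.conj (ecPre l1) (ecPre l2))
  | ecc2 (l : List (Act × Tm Act × Tm Act)) :
      Deriv (ecPre (l.map fun p => (p.1, Tm.conj p.2.1 p.2.2)))
            (Tm.conj (ecPre (l.map fun p => (p.1, p.2.1)))
                     (ecPre (l.map fun p => (p.1, p.2.2))))
  | ecc3 (l : List (Act × Tm Act × Tm Act)) :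
      (l.map Prod.fst).Nodup →
      Deriv (Tm.conj (ecPre (l.map fun p => (p.1, p.2.1)))
                     (ecPre (l.map fun p => (p.1, p.2.2))))
            (ecPre (l.map fun p => (p.1, Tm.conj p.2.1 p.2.2)))
  -- EXP1, EXP2
  | exp1 (A : Set Act) (l1 l2 : List (Act × Tm Act)) :
      (∀ p ∈ l1, Basic p.2) → (∀ q ∈ l2, Basic q.2) →
      Deriv (Tm.par A (ecPre l1) (ecPre l2)) (expRHS A l1 l2)
  | exp2 (A : Set Act) (l1 l2 : List (Act × Tm Act)) :
      (∀ p ∈ l1, Basic p.2) → (∀ q ∈ l2, Basic q.2) →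
      Deriv (expRHS A l1 l2) (Tm.par A (ecPre l1) (ecPre l2))

/-- The set `NF_B` of normal forms different from `⊥`. -/
inductive NFB : Tm Act → Prop where
  | mk (ls : List (List (Act × Tm Act))) :
      ls ≠ [] →
      (∀ l ∈ ls, (l.map Prod.fst).Nodup) →
      (∀ l ∈ ls, ∀ p ∈ l, NFB p.2) →
      NFB (bigDisj (ls.map ecPre))

/-- Normal forms. -/
def NF (t : Tm Act) : Prop := t = Tm.bot ∨ NFB t

end CLL

namespace CLL

variable {Act : Type} {M : Model Act}

lemma trI (hM : IsStable M) {t : Tm Act} {α : Option Act} {t' : Tm Act} :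
    M.Tr t α t' ↔ STr M t α t' := hM.1 t α t'

lemma fI (hM : IsStable M) {t : Tm Act} : M.F t ↔ SF M t := hM.2.1 t

lemma fbI (hM : IsStable M) {t : Tm Act} {α : Option Act} :
    M.Fbar t α ↔ SFbar M t α := hM.2.2 t α

/-- In a stable model, a term with a visible transition has no τ-transition. -/
lemma vis_stable (hM : IsStable M) {t : Tm Act} {α : Option Act} {t' : Tm Act}
    (h : STr M t α t') : ∀ a : Act, α = some a → ∀ s, ¬ STr M t none s := by
  induction h with
  | pre β u =>
      intro a ha s hs; subst ha; cases hs
  | ecL h1 h2 ih =>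
      intro a ha s hs
      cases hs with
      | ecTauL h => exact ih _ rfl _ h
      | ecTauR h => exact h2 _ ((trI hM).2 h)
  | ecR h1 h2 ih =>
      intro a ha s hs
      cases hs with
      | ecTauL h => exact h1 _ ((trI hM).2 h)
      | ecTauR h => exact ih _ rfl _ h
  | ecTauL _ _ => intro a ha; cases ha
  | ecTauR _ _ => intro a ha; cases ha
  | conjAct h1 h2 ih1 ih2 =>
      intro a ha s hs
      cases hs with
      | conjTauL h => exact ih1 _ rfl _ h
      | conjTauR h => exact ih2 _ rfl _ h
  | conjTauL _ _ => intro a ha; cases ha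
  | conjTauR _ _ => intro a ha; cases ha
  | disjL _ _ => intro a ha; cases ha
  | disjR _ _ => intro a ha; cases ha
  | parTauL _ _ => intro a ha; cases ha
  | parTauR _ _ => intro a ha; cases ha
  | parL h1 h2 h3 ih =>
      intro a ha s hs
      cases hs with
      | parTauL h => exact ih _ rfl _ h
      | parTauR h => exact h2 _ ((trI hM).2 h)
  | parR h1 h2 h3 ih =>
      intro a ha s hs
      cases hs with
      | parTauL h => exact h1 _ ((trI hM).2 h)
      | parTauR h => exact ih _ rfl _ h
  | parSync h1 h2 h3 ih1 ih2 =>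
      intro a ha s hs
      cases hs with
      | parTauL h => exact ih1 _ rfl _ h
      | parTauR h => exact ih2 _ rfl _ h

lemma f_ec (hM : IsStable M) {t1 t2 : Tm Act} :
    M.F (Tm.ec t1 t2) ↔ M.F t1 ∨ M.F t2 := by
  simp only [fI hM]
  constructor
  · intro h
    cases h with
    | ecL h => exact Or.inl h
    | ecR h => exact Or.inr h
  · rintro (h | h)
    exacts [SF.ecL h, SF.ecR h]

lemma f_par (hM : IsStable M) {A : Set Act} {t1 t2 : Tm Act} :
    M.F (Tm.par A t1 t2) ↔ M.F t1 ∨ M.F t2 := by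
  simp only [fI hM]
  constructor
  · intro h
    cases h with
    | parL h => exact Or.inl h
    | parR h => exact Or.inr h
  · rintro (h | h)
    exacts [SF.parL h, SF.parR h]

lemma f_conj_comp (hM : IsStable M) {t1 t2 : Tm Act}
    (h : ¬ M.F (Tm.conj t1 t2)) : ¬ M.F t1 ∧ ¬ M.F t2 := by
  constructor
  · intro h1; exact h ((fI hM).2 (SF.conjL ((fI hM).1 h1)))
  · intro h2; exact h ((fI hM).2 (SF.conjR ((fI hM).1 h2)))

/-- τ-transition introduction for the static operators, left and right. -/
lemma static_tau_L (hM : IsStable M) {op : Tm Act → Tm Act → Tm Act}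
    (hop : IsStaticOp Act op) {t1 u t2 : Tm Act} (h : M.Tr t1 none u) :
    M.Tr (op t1 t2) none (op u t2) := by
  rcases hop with rfl | rfl | ⟨A, rfl⟩
  · exact (trI hM).2 (STr.ecTauL ((trI hM).1 h))
  · exact (trI hM).2 (STr.conjTauL ((trI hM).1 h))
  · exact (trI hM).2 (STr.parTauL ((trI hM).1 h))

lemma static_tau_R (hM : IsStable M) {op : Tm Act → Tm Act → Tm Act}
    (hop : IsStaticOp Act op) {t1 t2 v : Tm Act} (h : M.Tr t2 none v) :
    M.Tr (op t1 t2) none (op t1 v) := by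
  rcases hop with rfl | rfl | ⟨A, rfl⟩
  · exact (trI hM).2 (STr.ecTauR ((trI hM).1 h))
  · exact (trI hM).2 (STr.conjTauR ((trI hM).1 h))
  · exact (trI hM).2 (STr.parTauR ((trI hM).1 h))

/-- τ-transition inversion for the static operators. -/
lemma static_tau_inv (hM : IsStable M) {op : Tm Act → Tm Act → Tm Act}
    (hop : IsStaticOp Act op) {t1 t2 z : Tm Act} (h : M.Tr (op t1 t2) none z) :
    (∃ u, z = op u t2 ∧ M.Tr t1 none u) ∨ (∃ v, z = op t1 v ∧ M.Tr t2 none v) := by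
  rcases hop with rfl | rfl | ⟨A, rfl⟩
  · cases (trI hM).1 h with
    | ecTauL hh => exact Or.inl ⟨_, rfl, (trI hM).2 hh⟩
    | ecTauR hh => exact Or.inr ⟨_, rfl, (trI hM).2 hh⟩
  · cases (trI hM).1 h with
    | conjTauL hh => exact Or.inl ⟨_, rfl, (trI hM).2 hh⟩
    | conjTauR hh => exact Or.inr ⟨_, rfl, (trI hM).2 hh⟩
  · cases (trI hM).1 h with
    | parTauL hh => exact Or.inl ⟨_, rfl, (trI hM).2 hh⟩
    | parTauR hh => exact Or.inr ⟨_, rfl, (trI hM).2 hh⟩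

lemma static_F_comp (hM : IsStable M) {op : Tm Act → Tm Act → Tm Act}
    (hop : IsStaticOp Act op) {t1 t2 : Tm Act} (h : ¬ M.F (op t1 t2)) :
    ¬ M.F t1 ∧ ¬ M.F t2 := by
  rcases hop with rfl | rfl | ⟨A, rfl⟩
  · rw [f_ec hM] at h; exact ⟨fun h1 => h (Or.inl h1), fun h2 => h (Or.inr h2)⟩
  · exact f_conj_comp hM h
  · rw [f_par hM] at h; exact ⟨fun h1 => h (Or.inl h1), fun h2 => h (Or.inr h2)⟩

lemma static_stable_comp (hM : IsStable M) {op : Tm Act → Tm Act → Tm Act}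
    (hop : IsStaticOp Act op) {t1 t2 : Tm Act} (h : Stable M (op t1 t2)) :
    Stable M t1 ∧ Stable M t2 := by
  constructor
  · intro u hu; exact h _ (static_tau_L hM hop hu)
  · intro v hv; exact h _ (static_tau_R hM hop hv)

lemma static_stable_intro (hM : IsStable M) {op : Tm Act → Tm Act → Tm Act}
    (hop : IsStaticOp Act op) {t1 t2 : Tm Act}
    (h1 : Stable M t1) (h2 : Stable M t2) : Stable M (op t1 t2) := by
  intro z hz
  rcases static_tau_inv hM hop hz with ⟨u, _, hu⟩ | ⟨v, _, hv⟩
  · exact h1 _ hu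
  · exact h2 _ hv

lemma epsF_last {t s : Tm Act} (h : EpsF M t s) : ¬ M.F s := by
  obtain ⟨hF, hp⟩ := h
  induction hp with
  | refl => exact hF
  | tail _ hstep ih => exact hstep.2.2

lemma ecpar_F (hM : IsStable M) {op : Tm Act → Tm Act → Tm Act}
    (hop : op = Tm.ec ∨ ∃ A : Set Act, op = Tm.par A) {t1 t2 : Tm Act} :
    M.F (op t1 t2) ↔ M.F t1 ∨ M.F t2 := by
  rcases hop with rfl | ⟨A, rfl⟩
  · exact f_ec hM
  · exact f_par hM

lemma ecpar_static {op : Tm Act → Tm Act → Tm Act}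
    (hop : op = Tm.ec ∨ ∃ A : Set Act, op = Tm.par A) : IsStaticOp Act op := by
  rcases hop with rfl | ⟨A, rfl⟩
  · exact Or.inl rfl
  · exact Or.inr (Or.inr ⟨A, rfl⟩)

lemma ecpar_lift_L (hM : IsStable M) {op : Tm Act → Tm Act → Tm Act}
    (hop : op = Tm.ec ∨ ∃ A : Set Act, op = Tm.par A) {t1 t1' t2 : Tm Act}
    (hp : Relation.ReflTransGen (TauF M) t1 t1') (hv : ¬ M.F t2) :
    Relation.ReflTransGen (TauF M) (op t1 t2) (op t1' t2) := by
  refine Relation.ReflTransGen.lift (fun x => op x t2) ?_ _ _ hp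
  rintro a b ⟨htr, ha, hb⟩
  refine ⟨static_tau_L hM (ecpar_static hop) htr, ?_, ?_⟩
  · rw [ecpar_F hM hop]; rintro (h | h); exacts [ha h, hv h]
  · rw [ecpar_F hM hop]; rintro (h | h); exacts [hb h, hv h]

lemma ecpar_lift_R (hM : IsStable M) {op : Tm Act → Tm Act → Tm Act}
    (hop : op = Tm.ec ∨ ∃ A : Set Act, op = Tm.par A) {t1 t2 t2' : Tm Act}
    (hp : Relation.ReflTransGen (TauF M) t2 t2') (hu : ¬ M.F t1) :
    Relation.ReflTransGen (TauF M) (op t1 t2) (op t1 t2') := by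
  refine Relation.ReflTransGen.lift (fun x => op t1 x) ?_ _ _ hp
  rintro a b ⟨htr, ha, hb⟩
  refine ⟨static_tau_R hM (ecpar_static hop) htr, ?_, ?_⟩
  · rw [ecpar_F hM hop]; rintro (h | h); exacts [hu h, ha h]
  · rw [ecpar_F hM hop]; rintro (h | h); exacts [hu h, hb h]

/-- Key step for conjunction, left component. -/
lemma conj_step_L (hM : IsStable M) {u u' v : Tm Act}
    (hu : ¬ M.F u) (hv : ¬ M.F v) (hstep : M.Tr u none u')
    (h' : ¬ M.F (Tm.conj u' v)) : ¬ M.F (Tm.conj u v) := by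
  intro hF
  have htr : STr M (Tm.conj u v) none (Tm.conj u' v) :=
    STr.conjTauL ((trI hM).1 hstep)
  cases (fI hM).1 hF with
  | conjL h => exact hu ((fI hM).2 h)
  | conjR h => exact hv ((fI hM).2 h)
  | conjMisL h1 h2 h3 => exact h3 _ ((trI hM).2 htr)
  | conjMisR h1 h2 h3 => exact h3 _ ((trI hM).2 htr)
  | conjDead hz hnb =>
      cases hz with
      | conjAct h1 h2 => exact vis_stable hM h1 _ rfl _ ((trI hM).1 hstep)
      | conjTauL h1 => exact hnb ((fbI hM).2 (SFbar.intro htr h'))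
      | conjTauR h2 => exact hnb ((fbI hM).2 (SFbar.intro htr h'))

/-- Key step for conjunction, right component. -/
lemma conj_step_R (hM : IsStable M) {u v v' : Tm Act}
    (hu : ¬ M.F u) (hv : ¬ M.F v) (hstep : M.Tr v none v')
    (h' : ¬ M.F (Tm.conj u v')) : ¬ M.F (Tm.conj u v) := by
  intro hF
  have htr : STr M (Tm.conj u v) none (Tm.conj u v') :=
    STr.conjTauR ((trI hM).1 hstep)
  cases (fI hM).1 hF with
  | conjL h => exact hu ((fI hM).2 h)
  | conjR h => exact hv ((fI hM).2 h)
  | conjMisL h1 h2 h3 => exact h3 _ ((trI hM).2 htr)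
  | conjMisR h1 h2 h3 => exact h3 _ ((trI hM).2 htr)
  | conjDead hz hnb =>
      cases hz with
      | conjAct h1 h2 => exact vis_stable hM h2 _ rfl _ ((trI hM).1 hstep)
      | conjTauL h1 => exact hnb ((fbI hM).2 (SFbar.intro htr h'))
      | conjTauR h2 => exact hnb ((fbI hM).2 (SFbar.intro htr h'))

lemma conj_eps_L (hM : IsStable M) {u t1' v : Tm Act}
    (h : Relation.ReflTransGen (TauF M) u t1') (hv : ¬ M.F v)
    (hend : ¬ M.F (Tm.conj t1' v)) :
    ¬ M.F (Tm.conj u v) ∧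
      Relation.ReflTransGen (TauF M) (Tm.conj u v) (Tm.conj t1' v) := by
  induction h using Relation.ReflTransGen.head_induction_on with
  | refl => exact ⟨hend, Relation.ReflTransGen.refl⟩
  | head hstep hrest ih =>
      obtain ⟨ihF, ihp⟩ := ih
      have hcur : ¬ M.F (Tm.conj _ v) :=
        conj_step_L hM hstep.2.1 hv hstep.1 ihF
      refine ⟨hcur, ihp.head ⟨static_tau_L hM (Or.inr (Or.inl rfl)) hstep.1, hcur, ihF⟩⟩

lemma conj_eps_R (hM : IsStable M) {u v t2' : Tm Act}
    (h : Relation.ReflTransGen (TauF M) v t2') (hu : ¬ M.F u)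
    (hend : ¬ M.F (Tm.conj u t2')) :
    ¬ M.F (Tm.conj u v) ∧
      Relation.ReflTransGen (TauF M) (Tm.conj u v) (Tm.conj u t2') := by
  induction h using Relation.ReflTransGen.head_induction_on with
  | refl => exact ⟨hend, Relation.ReflTransGen.refl⟩
  | head hstep hrest ih =>
      obtain ⟨ihF, ihp⟩ := ih
      have hcur : ¬ M.F (Tm.conj u _) :=
        conj_step_R hM hu hstep.2.1 hstep.1 ihF
      refine ⟨hcur, ihp.head ⟨static_tau_R hM (Or.inr (Or.inl rfl)) hstep.1, hcur, ihF⟩⟩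

lemma static_decomp (hM : IsStable M) {op : Tm Act → Tm Act → Tm Act}
    (hop : IsStaticOp Act op) {s t3 : Tm Act}
    (hp : Relation.ReflTransGen (TauF M) s t3) :
    ∀ t1 t2, s = op t1 t2 →
      ∃ t1' t2', t3 = op t1' t2' ∧
        Relation.ReflTransGen (TauF M) t1 t1' ∧
        Relation.ReflTransGen (TauF M) t2 t2' := by
  induction hp using Relation.ReflTransGen.head_induction_on with
  | refl =>
      intro t1 t2 h
      exact ⟨t1, t2, h, Relation.ReflTransGen.refl, Relation.ReflTransGen.refl⟩
  | head hstep hrest ih =>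
      intro t1 t2 h; subst h
      obtain ⟨htr, hFs, hFc⟩ := hstep
      rcases static_tau_inv hM hop htr with ⟨u, rfl, hu⟩ | ⟨v, rfl, hv⟩
      · obtain ⟨t1', t2', rfl, p1, p2⟩ := ih u t2 rfl
        have h1 := static_F_comp hM hop hFs
        have h2 := static_F_comp hM hop hFc
        exact ⟨t1', t2', rfl, p1.head ⟨hu, h1.1, h2.1⟩, p2⟩
      · obtain ⟨t1', t2', rfl, p1, p2⟩ := ih t1 v rfl
        have h1 := static_F_comp hM hop hFs
        have h2 := static_F_comp hM hop hFc
        exact ⟨t1', t2', rfl, p1, p2.head ⟨hv, h1.2, h2.2⟩⟩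

end CLL

/-- composition and decomposition of `⇒ε_F|` w.r.t. `□`, `∥_A`
and `∧`. -/
theorem stmt7 (Act : Type) (M : CLL.Model Act) (hM : CLL.IsStable M) :
    (∀ op : CLL.Tm Act → CLL.Tm Act → CLL.Tm Act,
      (op = CLL.Tm.ec ∨ ∃ A : Set Act, op = CLL.Tm.par A) →
      ∀ t1 t1' t2 t2' : CLL.Tm Act, CLL.EpsFS M t1 t1' → CLL.EpsFS M t2 t2' →
        CLL.EpsFS M (op t1 t2) (op t1' t2')) ∧
    (∀ t1 t1' t2 t2' : CLL.Tm Act, CLL.EpsFS M t1 t1' → CLL.EpsFS M t2 t2' →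
      ¬ M.F (CLL.Tm.conj t1' t2') →
      CLL.EpsFS M (CLL.Tm.conj t1 t2) (CLL.Tm.conj t1' t2')) ∧
    (∀ op : CLL.Tm Act → CLL.Tm Act → CLL.Tm Act, CLL.IsStaticOp Act op →
      ∀ t1 t2 t3 : CLL.Tm Act, CLL.EpsFS M (op t1 t2) t3 →
        ∃ t1' t2', CLL.EpsFS M t1 t1' ∧ CLL.EpsFS M t2 t2' ∧ t3 = op t1' t2') := by
  open CLL in
  refine ⟨?_, ?_, ?_⟩
  · -- composition for □ and ∥_A
    rintro op hop t1 t1' t2 t2' ⟨⟨hF1, hp1⟩, hs1⟩ ⟨⟨hF2, hp2⟩, hs2⟩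
    have hF1' : ¬ M.F t1' := CLL.epsF_last ⟨hF1, hp1⟩
    refine ⟨⟨?_, (CLL.ecpar_lift_L hM hop hp1 hF2).trans
      (CLL.ecpar_lift_R hM hop hp2 hF1')⟩,
      CLL.static_stable_intro hM (CLL.ecpar_static hop) hs1 hs2⟩
    rw [CLL.ecpar_F hM hop]
    rintro (h | h)
    exacts [hF1 h, hF2 h]
  · -- composition for ∧
    rintro t1 t1' t2 t2' ⟨⟨hF1, hp1⟩, hs1⟩ ⟨⟨hF2, hp2⟩, hs2⟩ hne
    have hF1' : ¬ M.F t1' := CLL.epsF_last ⟨hF1, hp1⟩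
    obtain ⟨hA, pathA⟩ := CLL.conj_eps_R hM hp2 hF1' hne
    obtain ⟨hB, pathB⟩ := CLL.conj_eps_L hM hp1 hF2 hA
    exact ⟨⟨hB, pathB.trans pathA⟩,
      CLL.static_stable_intro hM (Or.inr (Or.inl rfl)) hs1 hs2⟩
  · -- decomposition
    rintro op hop t1 t2 t3 ⟨⟨hF, hp⟩, hst⟩
    obtain ⟨t1', t2', rfl, p1, p2⟩ := CLL.static_decomp hM hop hp t1 t2 rfl
    have hc := CLL.static_F_comp hM hop hF
    have hstc := CLL.static_stable_comp hM hop hst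
    exact ⟨t1', t2', ⟨⟨hc.1, p1⟩, hstc.1⟩, ⟨⟨hc.2, p2⟩, hstc.2⟩, rfl⟩
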